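/- Assume mutual incoherence (Ψ_{jj}=1, max_{j'≠j}|Ψ_{jj'}| ≤ 1/(7αs), α > 1) and suppose Δ ∈ ℝ^{p×q} satisfies ‖Δ_{S*ᶜ}‖_{2,1} ≤ 3‖Δ_{S*}‖_{2,1} with |S*| ≤ s. Then ‖Δ_{S*}‖_F ≤ (α/(α−1))·4√s·‖ΨΔ‖_{2,∞}. -/

import Mathlib

open scoped BigOperators
open Matrix Classical

/-- Euclidean norm of a row. -/
noncomputable def rowNorm {q : ℕ} (v : Fin q → ℝ) : ℝ := Real.sqrt (∑ j, (v j) ^ 2)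

/-- `ℓ_{2,1}` norm: sum of row Euclidean norms. -/
noncomputable def norm21 {p q : ℕ} (B : Matrix (Fin p) (Fin q) ℝ) : ℝ :=
  ∑ j, rowNorm (B j)

/-- `ℓ_{2,∞}` norm: maximum of row Euclidean norms. -/
noncomputable def norm2inf {p q : ℕ} (B : Matrix (Fin p) (Fin q) ℝ) : ℝ :=
  ⨆ j, rowNorm (B j)

/-- Frobenius norm of a real matrix. -/
noncomputable def frob {n q : ℕ} (Z : Matrix (Fin n) (Fin q) ℝ) : ℝ :=
  Real.sqrt (∑ i, ∑ j, (Z i j) ^ 2)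

/-- Restriction of a matrix to a set of rows (zero outside `S`). -/
noncomputable def restrict {p q : ℕ} (B : Matrix (Fin p) (Fin q) ℝ) (S : Set (Fin p)) :
    Matrix (Fin p) (Fin q) ℝ :=
  fun j k => if j ∈ S then B j k else 0

/-- Mutual incoherence of the Gram matrix `Ψ = XᵀX/n`. -/
def MutualIncoherence {p : ℕ} (Ψ : Matrix (Fin p) (Fin p) ℝ) (α : ℝ) (s : ℕ) : Prop :=
  (∀ j, Ψ j j = 1) ∧ ∀ j j' : Fin p, j ≠ j' → |Ψ j j'| ≤ 1 / (7 * α * s)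

lemma rowNorm_nonneg {q : ℕ} (v : Fin q → ℝ) : 0 ≤ rowNorm v := Real.sqrt_nonneg _

lemma sq_rowNorm {q : ℕ} (v : Fin q → ℝ) : rowNorm v ^ 2 = ∑ j, v j ^ 2 :=
  Real.sq_sqrt (Finset.sum_nonneg fun _ _ => sq_nonneg _)

lemma cs_le {q : ℕ} (f g : Fin q → ℝ) : ∑ k, f k * g k ≤ rowNorm f * rowNorm g := by
  simpa [rowNorm] using Real.sum_mul_le_sqrt_mul_sqrt Finset.univ f g

lemma cs_abs {q : ℕ} (f g : Fin q → ℝ) : |∑ k, f k * g k| ≤ rowNorm f * rowNorm g := by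
  have h1 := cs_le f g
  have h2 := cs_le f (fun k => -g k)
  have hg : rowNorm (fun k => -g k) = rowNorm g := by simp [rowNorm]
  rw [hg] at h2
  simp only [mul_neg, Finset.sum_neg_distrib] at h2
  rw [abs_le]
  constructor <;> linarith

theorem key_bound {p q : ℕ} (Ψ : Matrix (Fin p) (Fin p) ℝ) (α : ℝ) (hα : 1 < α)
    (s : ℕ) (hs : 1 ≤ s) (hinc : MutualIncoherence Ψ α s)
    (Sstar : Set (Fin p)) (hcard : Sstar.ncard ≤ s)
    (Δ : Matrix (Fin p) (Fin q) ℝ)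
    (hcone : norm21 (restrict Δ Sstarᶜ) ≤ 3 * norm21 (restrict Δ Sstar)) :
    frob (restrict Δ Sstar) ≤
      (α / (α - 1)) * 4 * Real.sqrt s * norm2inf (Ψ * Δ) := by
  classical
  set T : Finset (Fin p) := Finset.univ.filter (fun j => j ∈ Sstar) with hT
  set r : Fin p → ℝ := fun j => rowNorm (Δ j) with hr
  set M : ℝ := norm2inf (Ψ * Δ) with hMdef
  set F : ℝ := frob (restrict Δ Sstar) with hFdef
  set LS : ℝ := ∑ j ∈ T, r j with hLS
  have hα0 : (0:ℝ) < α := by linarith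
  have hs0 : (0:ℝ) < s := by exact_mod_cast Nat.lt_of_lt_of_le Nat.zero_lt_one hs
  -- basic positivity
  have hr0 : ∀ j, 0 ≤ r j := fun j => rowNorm_nonneg _
  have hM0 : 0 ≤ M := Real.iSup_nonneg fun j => rowNorm_nonneg _
  have hF0 : 0 ≤ F := Real.sqrt_nonneg _
  have hLS0 : 0 ≤ LS := Finset.sum_nonneg fun j _ => hr0 j
  have hMle : ∀ j, rowNorm ((Ψ * Δ) j) ≤ M := by
    intro j
    rw [hMdef, norm2inf]
    exact le_ciSup (f := fun j => rowNorm ((Ψ * Δ) j))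
      (Set.Finite.bddAbove (Set.finite_range _)) j
  -- SqS
  set SqS : ℝ := ∑ j ∈ T, ∑ k, Δ j k ^ 2 with hSqS
  have hSqS0 : 0 ≤ SqS :=
    Finset.sum_nonneg fun j _ => Finset.sum_nonneg fun k _ => sq_nonneg _
  have hF2 : F ^ 2 = SqS := by
    rw [hFdef, frob, Real.sq_sqrt]
    · rw [hSqS, Finset.sum_filter]
      refine Finset.sum_congr rfl fun j _ => ?_
      by_cases hj : j ∈ Sstar <;> simp [restrict, hj]
    · exact Finset.sum_nonneg fun i _ => Finset.sum_nonneg fun k _ => sq_nonneg _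
  -- norm21 restrictions
  have hn21S : norm21 (restrict Δ Sstar) = LS := by
    rw [norm21, hLS, Finset.sum_filter]
    refine Finset.sum_congr rfl fun j _ => ?_
    by_cases hj : j ∈ Sstar <;> simp [restrict, hj, rowNorm, hr]
  have hn21Sc : norm21 (restrict Δ Sstarᶜ) =
      ∑ j ∈ Finset.univ.filter (fun j => ¬ j ∈ Sstar), r j := by
    rw [norm21, Finset.sum_filter]
    refine Finset.sum_congr rfl fun j _ => ?_
    by_cases hj : j ∈ Sstar <;> simp [restrict, hj, rowNorm, hr]
  -- total row-norm sum
  have hLtot : (∑ j, r j) ≤ 4 * LS := by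
    have hsplit : LS + (∑ j ∈ Finset.univ.filter (fun j => ¬ j ∈ Sstar), r j)
        = ∑ j, r j := by
      rw [hLS, hT]
      exact Finset.sum_filter_add_sum_filter_not Finset.univ (fun j => j ∈ Sstar) r
    rw [hn21S, hn21Sc] at hcone
    linarith
  -- Cauchy-Schwarz on LS
  have hLSF : LS ≤ Real.sqrt s * F := by
    have h1 : LS = ∑ j ∈ T, 1 * r j := by simp [hLS]
    have h2 := Real.sum_mul_le_sqrt_mul_sqrt T (fun _ => (1:ℝ)) r
    have h3 : (∑ j ∈ T, (1:ℝ) ^ 2) = (T.card : ℝ) := by simp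
    have h4 : (∑ j ∈ T, r j ^ 2) = SqS := by
      refine Finset.sum_congr rfl fun j _ => ?_
      simp [hr, sq_rowNorm]
    rw [h3, h4] at h2
    have h5 : Real.sqrt (T.card : ℝ) ≤ Real.sqrt s := by
      apply Real.sqrt_le_sqrt
      have : T.card = Sstar.ncard := by
        rw [Set.ncard_eq_toFinset_card']
        congr 1
        ext j
        simp [hT]
      rw [this]
      exact_mod_cast hcard
    have h6 : Real.sqrt SqS = F := by
      rw [← hF2, Real.sqrt_sq hF0]
    calc LS = ∑ j ∈ T, 1 * r j := h1
      _ ≤ Real.sqrt (T.card : ℝ) * Real.sqrt SqS := h2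
      _ ≤ Real.sqrt s * F := by
          rw [h6]
          exact mul_le_mul_of_nonneg_right h5 hF0
  -- key identity
  set d : Fin p → Fin p → ℝ := fun j j' => ∑ k, Δ j k * Δ j' k with hd
  have hrow : ∀ j, (∑ k, Δ j k * (Ψ * Δ) j k) = ∑ j', Ψ j j' * d j j' := by
    intro j
    simp only [Matrix.mul_apply, hd]
    calc ∑ k, Δ j k * (∑ j', Ψ j j' * Δ j' k)
        = ∑ k, ∑ j', Δ j k * (Ψ j j' * Δ j' k) := by
          refine Finset.sum_congr rfl fun k _ => ?_
          rw [Finset.mul_sum]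
      _ = ∑ j', ∑ k, Δ j k * (Ψ j j' * Δ j' k) := Finset.sum_comm
      _ = ∑ j', Ψ j j' * ∑ k, Δ j k * Δ j' k := by
          refine Finset.sum_congr rfl fun j' _ => ?_
          rw [Finset.mul_sum]
          exact Finset.sum_congr rfl fun k _ => by ring
  have hsplit2 : ∀ j, (∑ j', Ψ j j' * d j j')
      = d j j + ∑ j' ∈ Finset.univ.erase j, Ψ j j' * d j j' := by
    intro j
    rw [← Finset.add_sum_erase Finset.univ (fun j' => Ψ j j' * d j j')
      (Finset.mem_univ j), hinc.1 j, one_mul]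
  have hkey : SqS = (∑ j ∈ T, ∑ k, Δ j k * (Ψ * Δ) j k)
      - ∑ j ∈ T, ∑ j' ∈ Finset.univ.erase j, Ψ j j' * d j j' := by
    have heach : ∀ j ∈ T, (∑ k, Δ j k ^ 2) =
        (∑ k, Δ j k * (Ψ * Δ) j k)
          - ∑ j' ∈ Finset.univ.erase j, Ψ j j' * d j j' := by
      intro j _
      rw [hrow j, hsplit2 j]
      have hdd : d j j = ∑ k, Δ j k ^ 2 := by
        simp [hd, sq]
      rw [hdd]; ring
    rw [hSqS, Finset.sum_congr rfl heach, Finset.sum_sub_distrib]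
  -- bound the first term
  have hA : (∑ j ∈ T, ∑ k, Δ j k * (Ψ * Δ) j k) ≤ LS * M := by
    calc ∑ j ∈ T, ∑ k, Δ j k * (Ψ * Δ) j k
        ≤ ∑ j ∈ T, r j * M := by
          refine Finset.sum_le_sum fun j _ => ?_
          calc ∑ k, Δ j k * (Ψ * Δ) j k
              ≤ rowNorm (Δ j) * rowNorm ((Ψ * Δ) j) := cs_le _ _
            _ ≤ r j * M := mul_le_mul_of_nonneg_left (hMle j) (hr0 j)
      _ = LS * M := by rw [hLS, Finset.sum_mul]
  -- bound the cross term
  set c : ℝ := 1 / (7 * α * s) with hc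
  have hc0 : 0 ≤ c := by positivity
  have habsd : ∀ j j', |d j j'| ≤ r j * r j' := fun j j' => cs_abs _ _
  have hB : |∑ j ∈ T, ∑ j' ∈ Finset.univ.erase j, Ψ j j' * d j j'|
      ≤ c * (LS * ∑ j', r j') := by
    calc |∑ j ∈ T, ∑ j' ∈ Finset.univ.erase j, Ψ j j' * d j j'|
        ≤ ∑ j ∈ T, |∑ j' ∈ Finset.univ.erase j, Ψ j j' * d j j'| :=
          Finset.abs_sum_le_sum_abs _ _
      _ ≤ ∑ j ∈ T, ∑ j' ∈ Finset.univ.erase j, |Ψ j j' * d j j'| :=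
          Finset.sum_le_sum fun j _ => Finset.abs_sum_le_sum_abs _ _
      _ ≤ ∑ j ∈ T, ∑ j' ∈ Finset.univ.erase j, c * (r j * r j') := by
          refine Finset.sum_le_sum fun j _ => Finset.sum_le_sum fun j' hj' => ?_
          rw [abs_mul]
          have hne : j ≠ j' := (Finset.ne_of_mem_erase hj').symm
          exact mul_le_mul (hinc.2 j j' hne) (habsd j j')
            (abs_nonneg _) hc0
      _ ≤ ∑ j ∈ T, ∑ j', c * (r j * r j') := by
          refine Finset.sum_le_sum fun j _ => ?_
          refine Finset.sum_le_sum_of_subset_of_nonneg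
            (Finset.erase_subset _ _) fun j' _ _ => ?_
          exact mul_nonneg hc0 (mul_nonneg (hr0 j) (hr0 j'))
      _ = c * (LS * ∑ j', r j') := by
          rw [hLS, Finset.sum_mul, Finset.mul_sum]
          refine Finset.sum_congr rfl fun j _ => ?_
          rw [Finset.mul_sum, Finset.mul_sum]
  -- combine
  have hss : Real.sqrt s * Real.sqrt s = (s : ℝ) := Real.mul_self_sqrt hs0.le
  have h1 : SqS ≤ LS * M + c * (LS * ∑ j', r j') := by
    have := (abs_le.1 hB).2
    rw [hkey]
    have := neg_abs_le (∑ j ∈ T, ∑ j' ∈ Finset.univ.erase j, Ψ j j' * d j j')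
    linarith [(abs_le.1 hB).2]
  have h2 : LS * (∑ j', r j') ≤ (Real.sqrt s * F) * (4 * (Real.sqrt s * F)) := by
    have h2a : (∑ j', r j') ≤ 4 * (Real.sqrt s * F) := by
      calc (∑ j', r j') ≤ 4 * LS := hLtot
        _ ≤ 4 * (Real.sqrt s * F) := by linarith [hLSF]
    exact mul_le_mul hLSF h2a (Finset.sum_nonneg fun j _ => hr0 j)
      (mul_nonneg (Real.sqrt_nonneg _) hF0)
  have hmain2 : 7 * α * SqS ≤ 7 * α * (Real.sqrt s * F * M) + 4 * (F * F) := by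
    have hLM : LS * M ≤ Real.sqrt s * F * M :=
      mul_le_mul_of_nonneg_right hLSF hM0
    have hcLL : c * (LS * ∑ j', r j')
        ≤ c * ((Real.sqrt s * F) * (4 * (Real.sqrt s * F))) :=
      mul_le_mul_of_nonneg_left h2 hc0
    have heq : (7 * α) * (c * ((Real.sqrt s * F) * (4 * (Real.sqrt s * F))))
        = 4 * (F * F) := by
      rw [hc]
      have hsne : (s : ℝ) ≠ 0 := ne_of_gt hs0
      have hαne : α ≠ 0 := ne_of_gt hα0
      field_simp
      linear_combination F ^ 2 * hss
    have h4 : SqS ≤ Real.sqrt s * F * M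
        + c * ((Real.sqrt s * F) * (4 * (Real.sqrt s * F))) := by linarith
    have h5 := mul_le_mul_of_nonneg_left h4 (by positivity : (0:ℝ) ≤ 7 * α)
    calc 7 * α * SqS ≤ 7 * α * (Real.sqrt s * F * M
          + c * ((Real.sqrt s * F) * (4 * (Real.sqrt s * F)))) := h5
      _ = 7 * α * (Real.sqrt s * F * M)
          + (7 * α) * (c * ((Real.sqrt s * F) * (4 * (Real.sqrt s * F)))) := by ring
      _ = 7 * α * (Real.sqrt s * F * M) + 4 * (F * F) := by rw [heq]
  -- conclude
  have hα1 : (0:ℝ) < α - 1 := by linarith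
  rcases eq_or_lt_of_le hF0 with hF | hF
  · rw [← hF]
    have hq1 : (0:ℝ) ≤ α / (α - 1) := le_of_lt (div_pos hα0 hα1)
    exact mul_nonneg (mul_nonneg (mul_nonneg hq1 (by norm_num))
      (Real.sqrt_nonneg _)) hM0
  · have hFF : SqS = F * F := by rw [← hF2]; ring
    rw [hFF] at hmain2
    have hq : ((7 * α - 4) * F) * F ≤ (7 * α * (Real.sqrt s * M)) * F := by
      linarith [hmain2]
    have hq2 : (7 * α - 4) * F ≤ 7 * α * (Real.sqrt s * M) :=
      le_of_mul_le_mul_right hq hF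
    have hsM : 0 ≤ Real.sqrt s * M := mul_nonneg (Real.sqrt_nonneg _) hM0
    have h7 : 7 * (α - 1) * F ≤ (7 * α - 4) * F := by linarith [hF.le]
    have hgoal : (α - 1) * F ≤ 4 * α * (Real.sqrt s * M) := by
      linarith [h7, hq2, mul_nonneg hα0.le hsM]
    have hfinal : F ≤ (4 * α * (Real.sqrt s * M)) / (α - 1) :=
      (le_div_iff₀ hα1).2 (by linarith [hgoal])
    have heq2 : (4 * α * (Real.sqrt s * M)) / (α - 1)
        = (α / (α - 1)) * 4 * Real.sqrt s * M := by
      field_simp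
    rw [heq2] at hfinal
    exact hfinal


/-- Under mutual incoherence and the cone condition,
`‖Δ_{S*}‖_F ≤ (α/(α−1))·4√s·‖ΨΔ‖_{2,∞}`. -/
theorem frob_restriction_bound {n p q : ℕ} (hn : 0 < n)
    (X : Matrix (Fin n) (Fin p) ℝ) (α : ℝ) (hα : 1 < α) (s : ℕ) (hs : 1 ≤ s)
    (hinc : MutualIncoherence ((1 / (n : ℝ)) • (Xᵀ * X)) α s)
    (Sstar : Set (Fin p)) (hcard : Sstar.ncard ≤ s)
    (Δ : Matrix (Fin p) (Fin q) ℝ)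
    (hcone : norm21 (restrict Δ Sstarᶜ) ≤ 3 * norm21 (restrict Δ Sstar)) :
    frob (restrict Δ Sstar) ≤
      (α / (α - 1)) * 4 * Real.sqrt s *
        norm2inf (((1 / (n : ℝ)) • (Xᵀ * X)) * Δ) := by
  exact key_bound _ α hα s hs hinc Sstar hcard Δ hcone
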